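/- Let F = {f_1, …, f_m} be a t-sparse family of coverage functions on ground set [n] with multilinear extensions F_i, and let k ≥ 2. Let Y : [n] → Δ_k be a fractional k-coloring, let Z ⊆ [n] be its set of fractional elements, and let D ⊆ Z satisfy |S ∩ D| ≤ 1 for every S ∈ S. Then there exists a finitely supported random fractional k-coloring Y' : [n] → Δ_k such that almost surely: Y'_j = Y_j for all j ∉ D; every d ∈ D satisfies Y'_d ∈ {0,1}^k (so Y' has exactly |Z| − |D| fractional elements); and |F_i(Y'_ℓ) − F_i(Y_ℓ)| ≤ 3t for all i ∈ [m] and ℓ ∈ [k]; and moreover E[Y'_ℓ] = Y_ℓ for every ℓ ∈ [k]. -/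

import Mathlib

open Finset

/-- Coverage function determined by a multiset `C` of subsets of `[n]`:
`f(T) = Σ_{S ∈ C} min(|S ∩ T|, 1)`. -/
noncomputable def cov {n : ℕ} (C : Multiset (Finset (Fin n))) (T : Finset (Fin n)) : ℝ :=
  (C.map (fun s => min ((s ∩ T).card : ℝ) 1)).sum

/-- Multilinear extension of a set function `f : 2^{[n]} → ℝ`. -/
noncomputable def mlext {n : ℕ} (f : Finset (Fin n) → ℝ) (x : Fin n → ℝ) : ℝ :=
  ∑ T : Finset (Fin n), f T * (∏ i ∈ T, x i) * (∏ j ∈ Tᶜ, (1 - x j))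

/-- `Y` is a fractional `k`-coloring: each `Y j` lies in the simplex `Δ_k`. -/
def IsFracColoring {n k : ℕ} (Y : Fin n → Fin k → ℝ) : Prop :=
  ∀ j : Fin n, (∀ ℓ, 0 ≤ Y j ℓ ∧ Y j ℓ ≤ 1) ∧ (∑ ℓ, Y j ℓ) = 1

set_option linter.unusedSectionVars false

section Helpers

lemma sum_powerset_prod {α : Type*} [DecidableEq α] (s : Finset α) (x : α → ℝ) :
    ∑ T ∈ s.powerset, (∏ i ∈ T, x i) * ∏ j ∈ s \ T, (1 - x j) = 1 := by
  rw [← Finset.prod_add]; simp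

lemma mlext_one {n : ℕ} (x : Fin n → ℝ) :
    ∑ T : Finset (Fin n), (∏ i ∈ T, x i) * (∏ j ∈ Tᶜ, (1 - x j)) = 1 := by
  calc ∑ T : Finset (Fin n), (∏ i ∈ T, x i) * (∏ j ∈ Tᶜ, (1 - x j))
      = ∑ T ∈ (Finset.univ : Finset (Fin n)).powerset,
          (∏ i ∈ T, x i) * ∏ j ∈ Finset.univ \ T, (1 - x j) := by
        rw [Finset.powerset_univ]
        exact Finset.sum_congr rfl (fun T _ => by rw [Finset.compl_eq_univ_sdiff])
    _ = 1 := sum_powerset_prod _ _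

lemma mlext_empty_ind {n : ℕ} (s : Finset (Fin n)) (x : Fin n → ℝ) :
    ∑ T : Finset (Fin n), (if s ∩ T = ∅ then (1:ℝ) else 0) * (∏ i ∈ T, x i) * (∏ j ∈ Tᶜ, (1 - x j))
      = ∏ j ∈ s, (1 - x j) := by
  have step1 : ∑ T : Finset (Fin n),
      (if s ∩ T = ∅ then (1:ℝ) else 0) * (∏ i ∈ T, x i) * (∏ j ∈ Tᶜ, (1 - x j))
      = ∑ T ∈ Finset.univ.filter (fun T : Finset (Fin n) => s ∩ T = ∅),
          (∏ i ∈ T, x i) * (∏ j ∈ Tᶜ, (1 - x j)) := by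
    rw [Finset.sum_filter]
    exact Finset.sum_congr rfl (fun T _ => by by_cases h : s ∩ T = ∅ <;> simp [h])
  have hset : Finset.univ.filter (fun T : Finset (Fin n) => s ∩ T = ∅) = sᶜ.powerset := by
    ext T
    simp only [Finset.mem_filter, Finset.mem_univ, true_and, Finset.mem_powerset]
    constructor
    · intro h j hj
      simp only [Finset.mem_compl]
      intro hjs
      have : j ∈ s ∩ T := Finset.mem_inter.2 ⟨hjs, hj⟩
      simp [h] at this
    · intro h
      ext j
      simp only [Finset.mem_inter, Finset.notMem_empty, iff_false]
      rintro ⟨hjs, hjT⟩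
      have := h hjT
      simp [Finset.mem_compl, hjs] at this
  have key : ∀ T ∈ sᶜ.powerset,
      (∏ i ∈ T, x i) * (∏ j ∈ Tᶜ, (1 - x j))
        = (∏ j ∈ s, (1 - x j)) * ((∏ i ∈ T, x i) * (∏ j ∈ sᶜ \ T, (1 - x j))) := by
    intro T hT
    rw [Finset.mem_powerset] at hT
    have hTc : Tᶜ = s ∪ (sᶜ \ T) := by
      ext j
      simp only [Finset.mem_compl, Finset.mem_union, Finset.mem_sdiff]
      constructor
      · intro hj
        by_cases hjs : j ∈ s
        · exact Or.inl hjs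
        · exact Or.inr ⟨by simpa [Finset.mem_compl] using hjs, hj⟩
      · rintro (hjs | ⟨_, hj⟩)
        · intro hjT
          have := hT hjT
          simp [Finset.mem_compl, hjs] at this
        · exact hj
    have hdisj : Disjoint s (sᶜ \ T) :=
      (disjoint_compl_right).mono_right Finset.sdiff_subset
    rw [hTc, Finset.prod_union hdisj]
    ring
  rw [step1, hset, Finset.sum_congr rfl key, ← Finset.mul_sum, sum_powerset_prod, mul_one]

lemma mlext_min_one {n : ℕ} (s : Finset (Fin n)) (x : Fin n → ℝ) :
    mlext (fun T => min ((s ∩ T).card : ℝ) 1) x = 1 - ∏ j ∈ s, (1 - x j) := by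
  have hmin : ∀ T : Finset (Fin n),
      min ((s ∩ T).card : ℝ) 1 = 1 - (if s ∩ T = ∅ then (1:ℝ) else 0) := by
    intro T
    by_cases h : s ∩ T = ∅
    · simp [h]
    · have : 1 ≤ (s ∩ T).card := Finset.card_pos.2 (Finset.nonempty_iff_ne_empty.2 h)
      have h1 : (1:ℝ) ≤ ((s ∩ T).card : ℝ) := by exact_mod_cast this
      simp [h, min_eq_right h1]
  unfold mlext
  calc ∑ T : Finset (Fin n), min ((s ∩ T).card : ℝ) 1 * (∏ i ∈ T, x i) * (∏ j ∈ Tᶜ, (1 - x j))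
      = ∑ T : Finset (Fin n),
          ((∏ i ∈ T, x i) * (∏ j ∈ Tᶜ, (1 - x j))
            - (if s ∩ T = ∅ then (1:ℝ) else 0) * (∏ i ∈ T, x i) * (∏ j ∈ Tᶜ, (1 - x j))) := by
        exact Finset.sum_congr rfl (fun T _ => by rw [hmin T]; ring)
    _ = 1 - ∏ j ∈ s, (1 - x j) := by
        rw [Finset.sum_sub_distrib, mlext_one, mlext_empty_ind]

lemma mlext_cov {n : ℕ} (C : Multiset (Finset (Fin n))) (x : Fin n → ℝ) :
    mlext (cov C) x = (C.map (fun s => 1 - ∏ j ∈ s, (1 - x j))).sum := by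
  induction C using Multiset.induction with
  | empty => simp [cov, mlext]
  | cons a s ih =>
    have : cov (a ::ₘ s) = fun T => min ((a ∩ T).card : ℝ) 1 + cov s T := by
      funext T; simp [cov]
    rw [this]
    have hadd : mlext (fun T => min ((a ∩ T).card : ℝ) 1 + cov s T) x
        = mlext (fun T => min ((a ∩ T).card : ℝ) 1) x + mlext (cov s) x := by
      unfold mlext
      rw [← Finset.sum_add_distrib]
      exact Finset.sum_congr rfl (fun T _ => by ring)
    rw [hadd, mlext_min_one, ih]
    simp

lemma multiset_sum_map_sum {α β : Type*} (C : Multiset α) (D : Finset β) (g : β → α → ℝ) :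
    (C.map (fun S => ∑ d ∈ D, g d S)).sum = ∑ d ∈ D, (C.map (g d)).sum := by
  induction C using Multiset.induction with
  | empty => simp
  | cons a s ih => simp [ih, Finset.sum_add_distrib]

lemma multiset_sum_map_sub {α : Type*} (C : Multiset α) (f g : α → ℝ) :
    (C.map f).sum - (C.map g).sum = (C.map (fun a => f a - g a)).sum := by
  induction C using Multiset.induction with
  | empty => simp
  | cons a s ih => simp [← ih]; ring

lemma multiset_sum_map_ite {α : Type*} (C : Multiset α) (p : α → Prop) [DecidablePred p]
    (g : α → ℝ) :
    (C.map (fun a => if p a then g a else 0)).sum = ((C.filter p).map g).sum := by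
  induction C using Multiset.induction with
  | empty => simp
  | cons a s ih =>
    by_cases h : p a <;> simp [h, ih, Multiset.filter_cons]

lemma prod_diff_indep {n : ℕ} (D : Finset (Fin n)) (x y : Fin n → ℝ)
    (hxy : ∀ j ∉ D, x j = y j) (s : Finset (Fin n)) (hs : (s ∩ D).card ≤ 1) :
    (∏ j ∈ s, (1 - y j)) - (∏ j ∈ s, (1 - x j))
      = ∑ d ∈ D, (if d ∈ s then (x d - y d) * ∏ j ∈ s.erase d, (1 - y j) else 0) := by
  interval_cases h : (s ∩ D).card
  · -- card 0
    have hempty : s ∩ D = ∅ := Finset.card_eq_zero.1 h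
    have hnot : ∀ j ∈ s, j ∉ D := by
      intro j hj hjD
      have : j ∈ s ∩ D := Finset.mem_inter.2 ⟨hj, hjD⟩
      simp [hempty] at this
    have hprod : (∏ j ∈ s, (1 - x j)) = ∏ j ∈ s, (1 - y j) :=
      Finset.prod_congr rfl (fun j hj => by rw [hxy j (hnot j hj)])
    have hz : ∑ d ∈ D, (if d ∈ s then (x d - y d) * ∏ j ∈ s.erase d, (1 - y j) else 0) = 0 :=
      Finset.sum_eq_zero (fun d hd => by
        have hds : ¬ d ∈ s := fun hds => by
          have : d ∈ s ∩ D := Finset.mem_inter.2 ⟨hds, hd⟩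
          simp [hempty] at this
        simp [hds])
    rw [hprod, hz]
    ring
  · -- card 1
    obtain ⟨d₀, hd₀⟩ := Finset.card_eq_one.1 h
    have hd₀s : d₀ ∈ s := by
      have : d₀ ∈ s ∩ D := by rw [hd₀]; exact Finset.mem_singleton_self d₀
      exact (Finset.mem_inter.1 this).1
    have hd₀D : d₀ ∈ D := by
      have : d₀ ∈ s ∩ D := by rw [hd₀]; exact Finset.mem_singleton_self d₀
      exact (Finset.mem_inter.1 this).2
    have herase : ∀ j ∈ s.erase d₀, x j = y j := by
      intro j hj
      have hjs : j ∈ s := Finset.mem_of_mem_erase hj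
      have hjne : j ≠ d₀ := Finset.ne_of_mem_erase hj
      apply hxy
      intro hjD
      have : j ∈ s ∩ D := Finset.mem_inter.2 ⟨hjs, hjD⟩
      rw [hd₀] at this
      exact hjne (Finset.mem_singleton.1 this)
    rw [Finset.sum_eq_single_of_mem d₀ hd₀D (fun d hd hne => by
      by_cases hds : d ∈ s
      · exfalso
        have : d ∈ s ∩ D := Finset.mem_inter.2 ⟨hds, hd⟩
        rw [hd₀] at this
        exact hne (Finset.mem_singleton.1 this)
      · simp [hds])]
    rw [if_pos hd₀s]
    rw [← Finset.mul_prod_erase s (fun j => 1 - y j) hd₀s,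
        ← Finset.mul_prod_erase s (fun j => 1 - x j) hd₀s]
    have : (∏ j ∈ s.erase d₀, (1 - x j)) = ∏ j ∈ s.erase d₀, (1 - y j) :=
      Finset.prod_congr rfl (fun j hj => by rw [herase j hj])
    rw [this]
    ring

lemma cov_diff {n : ℕ} (C : Multiset (Finset (Fin n))) (D : Finset (Fin n))
    (hind : ∀ s ∈ C, (s ∩ D).card ≤ 1)
    (x y : Fin n → ℝ) (hxy : ∀ j ∉ D, x j = y j) :
    mlext (cov C) x - mlext (cov C) y
      = ∑ d ∈ D, (x d - y d) *
          ((C.filter (fun s => d ∈ s)).map (fun s => ∏ j ∈ s.erase d, (1 - y j))).sum := by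
  classical
  rw [mlext_cov, mlext_cov, multiset_sum_map_sub]
  have e1 : (C.map (fun s => (1 - ∏ j ∈ s, (1 - x j)) - (1 - ∏ j ∈ s, (1 - y j)))).sum
      = (C.map (fun s => ∑ d ∈ D,
          if d ∈ s then (x d - y d) * ∏ j ∈ s.erase d, (1 - y j) else 0)).sum := by
    apply congrArg Multiset.sum
    apply Multiset.map_congr rfl
    intro s hs
    have h := prod_diff_indep D x y hxy s (hind s hs)
    calc (1 - ∏ j ∈ s, (1 - x j)) - (1 - ∏ j ∈ s, (1 - y j))
        = (∏ j ∈ s, (1 - y j)) - (∏ j ∈ s, (1 - x j)) := by ring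
      _ = _ := h
  rw [e1, multiset_sum_map_sum]
  apply Finset.sum_congr rfl
  intro d _
  have e2 : (C.map (fun s =>
      if d ∈ s then (x d - y d) * ∏ j ∈ s.erase d, (1 - y j) else 0)).sum
      = ((C.filter (fun s => d ∈ s)).map
          (fun s => (x d - y d) * ∏ j ∈ s.erase d, (1 - y j))).sum :=
    multiset_sum_map_ite C (fun s => d ∈ s) _
  rw [e2, Multiset.sum_map_mul_left]

lemma multiset_map_sum_le {α : Type*} (M : Multiset α) (g : α → ℝ)
    (h : ∀ a ∈ M, g a ≤ 1) : (M.map g).sum ≤ (M.card : ℝ) := by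
  induction M using Multiset.induction with
  | empty => simp
  | cons a s ih =>
    simp only [Multiset.map_cons, Multiset.sum_cons, Multiset.card_cons]
    push_cast
    have h1 : g a ≤ 1 := h a (Multiset.mem_cons_self a s)
    have h2 : (s.map g).sum ≤ (s.card : ℝ) :=
      ih (fun a' ha' => h a' (Multiset.mem_cons_of_mem ha'))
    linarith

lemma multiset_map_sum_nonneg {α : Type*} (M : Multiset α) (g : α → ℝ)
    (h : ∀ a ∈ M, 0 ≤ g a) : 0 ≤ (M.map g).sum := by
  induction M using Multiset.induction with
  | empty => simp
  | cons a s ih =>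
    simp only [Multiset.map_cons, Multiset.sum_cons]
    have h1 := h a (Multiset.mem_cons_self a s)
    have h2 := ih (fun a' ha' => h a' (Multiset.mem_cons_of_mem ha'))
    linarith

end Helpers

section BF
open scoped Classical

variable {ι R : Type*} [Fintype ι] [DecidableEq ι] [Fintype R] {k : ℕ}

/-- fractional coordinates -/
noncomputable def frset (z : ι → Fin k → ℝ) : Finset (ι × Fin k) :=
  Finset.univ.filter (fun c => z c.1 c.2 ≠ 0 ∧ z c.1 c.2 ≠ 1)

lemma exists_kernel_vec (Fr : Finset (ι × Fin k)) (Act : Finset R) (Grp : Finset ι)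
    (A : R → ι → Fin k → ℝ)
    (hcount : Act.card + Grp.card < Fr.card) :
    ∃ u : {c // c ∈ Fr} → ℝ, u ≠ 0 ∧
      (∀ r ∈ Act, ∑ c : {c // c ∈ Fr}, A r c.1.1 c.1.2 * u c = 0) ∧
      (∀ i ∈ Grp, ∑ c : {c // c ∈ Fr}, (if c.1.1 = i then (1:ℝ) else 0) * u c = 0) := by
  let B : Matrix ({r // r ∈ Act} ⊕ {i // i ∈ Grp}) {c // c ∈ Fr} ℝ :=
    fun q c => Sum.elim (fun r => A r.1 c.1.1 c.1.2) (fun i => if c.1.1 = i.1 then (1:ℝ) else 0) q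
  let φ := B.mulVecLin
  have hnotinj : ¬ Function.Injective φ := by
    intro hinj
    have hle := LinearMap.finrank_le_finrank_of_injective hinj
    rw [Module.finrank_fintype_fun_eq_card, Module.finrank_fintype_fun_eq_card] at hle
    rw [Fintype.card_coe] at hle
    rw [Fintype.card_sum, Fintype.card_coe, Fintype.card_coe] at hle
    omega
  have hker : LinearMap.ker φ ≠ ⊥ := fun h => hnotinj (LinearMap.ker_eq_bot.1 h)
  obtain ⟨u, hu, hu0⟩ := (Submodule.ne_bot_iff _).1 hker
  refine ⟨u, hu0, ?_, ?_⟩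
  · intro r hr
    have := congrFun (LinearMap.mem_ker.1 hu) (Sum.inl ⟨r, hr⟩)
    rw [Matrix.mulVecLin_apply] at this
    simpa [φ, B, Matrix.mulVecLin_apply, Matrix.mulVec, dotProduct] using this
  · intro i hi
    have := congrFun (LinearMap.mem_ker.1 hu) (Sum.inr ⟨i, hi⟩)
    rw [Matrix.mulVecLin_apply] at this
    simpa [φ, B, Matrix.mulVecLin_apply, Matrix.mulVec, dotProduct] using this

lemma frac_pair {k : ℕ} {z : ι → Fin k → ℝ}
    (hz0 : ∀ i ℓ, 0 ≤ z i ℓ) (hz1 : ∀ i ℓ, z i ℓ ≤ 1) (hzs : ∀ i, ∑ ℓ, z i ℓ = 1)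
    {i : ι} {ℓ₀ : Fin k} (h : (i, ℓ₀) ∈ frset z) :
    ∃ ℓ₁, ℓ₁ ≠ ℓ₀ ∧ (i, ℓ₁) ∈ frset z := by
  simp only [frset, Finset.mem_filter, Finset.mem_univ, true_and] at h
  obtain ⟨h0, h1⟩ := h
  have hlt : 0 < z i ℓ₀ := lt_of_le_of_ne (hz0 i ℓ₀) (Ne.symm h0)
  have hlt1 : z i ℓ₀ < 1 := lt_of_le_of_ne (hz1 i ℓ₀) h1
  by_contra hcon
  push_neg at hcon
  have hint : ∀ ℓ ∈ Finset.univ.erase ℓ₀, z i ℓ = 0 ∨ z i ℓ = 1 := by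
    intro ℓ hℓ
    have hne : ℓ ≠ ℓ₀ := Finset.ne_of_mem_erase hℓ
    have := hcon ℓ hne
    simp only [frset, Finset.mem_filter, Finset.mem_univ, true_and, not_and_or, not_not] at this
    tauto
  have hsum : z i ℓ₀ + ∑ ℓ ∈ Finset.univ.erase ℓ₀, z i ℓ = 1 := by
    rw [Finset.add_sum_erase _ _ (Finset.mem_univ ℓ₀)]
    exact hzs i
  have hS0 : 0 < ∑ ℓ ∈ Finset.univ.erase ℓ₀, z i ℓ := by linarith
  have hS1 : ∑ ℓ ∈ Finset.univ.erase ℓ₀, z i ℓ < 1 := by linarith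
  have hall0 : ∀ ℓ ∈ Finset.univ.erase ℓ₀, z i ℓ = 0 := by
    intro ℓ hℓ
    rcases hint ℓ hℓ with h' | h'
    · exact h'
    · exfalso
      have : z i ℓ ≤ ∑ ℓ' ∈ Finset.univ.erase ℓ₀, z i ℓ' :=
        Finset.single_le_sum (fun ℓ' _ => hz0 i ℓ') hℓ
      rw [h'] at this
      linarith
  have : ∑ ℓ ∈ Finset.univ.erase ℓ₀, z i ℓ = 0 := Finset.sum_eq_zero hall0
  linarith

lemma grp_count {k : ℕ} {z : ι → Fin k → ℝ}
    (hz0 : ∀ i ℓ, 0 ≤ z i ℓ) (hz1 : ∀ i ℓ, z i ℓ ≤ 1) (hzs : ∀ i, ∑ ℓ, z i ℓ = 1) :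
    2 * ((frset z).image Prod.fst).card ≤ (frset z).card := by
  rw [Finset.card_eq_sum_card_fiberwise
    (fun c hc => Finset.mem_image_of_mem Prod.fst hc : ∀ c ∈ frset z,
      c.1 ∈ (frset z).image Prod.fst)]
  calc 2 * ((frset z).image Prod.fst).card
      = ∑ _i ∈ (frset z).image Prod.fst, 2 := by rw [Finset.sum_const, smul_eq_mul]; ring
    _ ≤ ∑ i ∈ (frset z).image Prod.fst, ((frset z).filter (fun c => c.1 = i)).card := by
        apply Finset.sum_le_sum
        intro i hi
        obtain ⟨c, hc, hci⟩ := Finset.mem_image.1 hi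
        have hc' : (i, c.2) ∈ frset z := by rwa [← hci, Prod.mk.eta]
        obtain ⟨ℓ₁, hne, hℓ₁⟩ := frac_pair hz0 hz1 hzs hc'
        rw [Nat.succ_le_iff]
        apply Finset.one_lt_card.2
        refine ⟨(i, c.2), ?_, (i, ℓ₁), ?_, ?_⟩
        · exact Finset.mem_filter.2 ⟨hc', rfl⟩
        · exact Finset.mem_filter.2 ⟨hℓ₁, rfl⟩
        · simp [Prod.ext_iff, Ne.symm hne]

lemma act_count {k : ℕ} (A : R → ι → Fin k → ℝ) (hA : ∀ r i ℓ, 0 ≤ A r i ℓ)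
    (t : ℝ) (ht : 0 ≤ t) (hcol : ∀ i ℓ, ∑ r, A r i ℓ ≤ t)
    (Fr : Finset (ι × Fin k)) :
    2 * (Finset.univ.filter (fun r : R => 2*t < ∑ c ∈ Fr, A r c.1 c.2)).card < Fr.card ∨
    (Finset.univ.filter (fun r : R => 2*t < ∑ c ∈ Fr, A r c.1 c.2)) = ∅ := by
  set Act := Finset.univ.filter (fun r : R => 2*t < ∑ c ∈ Fr, A r c.1 c.2) with hAct
  rcases Finset.eq_empty_or_nonempty Act with h | hne
  · exact Or.inr h
  left
  have hmass_nonneg : ∀ r : R, 0 ≤ ∑ c ∈ Fr, A r c.1 c.2 :=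
    fun r => Finset.sum_nonneg (fun c _ => hA r c.1 c.2)
  have h1 : (Act.card : ℝ) * (2*t) < ∑ r ∈ Act, ∑ c ∈ Fr, A r c.1 c.2 := by
    have := Finset.sum_lt_sum_of_nonempty hne
      (f := fun _ => 2*t) (g := fun r => ∑ c ∈ Fr, A r c.1 c.2)
      (fun r hr => (Finset.mem_filter.1 hr).2)
    simpa [Finset.sum_const, nsmul_eq_mul] using this
  have h2 : ∑ r ∈ Act, ∑ c ∈ Fr, A r c.1 c.2 ≤ ∑ r : R, ∑ c ∈ Fr, A r c.1 c.2 :=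
    Finset.sum_le_sum_of_subset_of_nonneg (Finset.subset_univ _)
      (fun r _ _ => hmass_nonneg r)
  have h3 : ∑ r : R, ∑ c ∈ Fr, A r c.1 c.2 ≤ (Fr.card : ℝ) * t := by
    rw [Finset.sum_comm]
    calc ∑ c ∈ Fr, ∑ r : R, A r c.1 c.2 ≤ ∑ _c ∈ Fr, t :=
          Finset.sum_le_sum (fun c _ => hcol c.1 c.2)
      _ = (Fr.card : ℝ) * t := by rw [Finset.sum_const, nsmul_eq_mul]
  have ht0 : 0 < t := by
    rcases lt_or_eq_of_le ht with h | h
    · exact h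
    · exfalso
      rw [← h] at h1 h3
      have e1 : (Act.card : ℝ) * (2*0) = 0 := by ring
      rw [e1] at h1
      have e2 : (Fr.card : ℝ) * 0 = 0 := by ring
      rw [e2] at h3
      linarith
  have : (Act.card : ℝ) * (2 * t) < (Fr.card : ℝ) * t := by linarith
  have h2a : (2 * Act.card : ℝ) < (Fr.card : ℝ) := by
    have := lt_of_mul_lt_mul_right (by linarith : (2 * Act.card : ℝ) * t < (Fr.card : ℝ) * t) ht0.le
    exact this
  exact_mod_cast h2a

/-- Properties of a one-step modification `zc` of `z`. -/
def BFok {k : ℕ} (A : R → ι → Fin k → ℝ) (t : ℝ) (z zc : ι → Fin k → ℝ) : Prop :=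
  (∀ i ℓ, 0 ≤ zc i ℓ) ∧ (∀ i ℓ, zc i ℓ ≤ 1) ∧ (∀ i, ∑ ℓ, zc i ℓ = 1) ∧
  (∀ c : ι × Fin k, c ∉ frset z → zc c.1 c.2 = z c.1 c.2) ∧
  (frset zc).card < (frset z).card ∧
  (∀ r, 2*t < ∑ c ∈ frset z, A r c.1 c.2 →
    ∑ i, ∑ ℓ, A r i ℓ * zc i ℓ = ∑ i, ∑ ℓ, A r i ℓ * z i ℓ)

lemma shift_ok {k : ℕ} (A : R → ι → Fin k → ℝ) (t : ℝ)
    (z : ι → Fin k → ℝ) (hz0 : ∀ i ℓ, 0 ≤ z i ℓ) (hz1 : ∀ i ℓ, z i ℓ ≤ 1)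
    (hzs : ∀ i, ∑ ℓ, z i ℓ = 1)
    (W : ι → Fin k → ℝ)
    (hWout : ∀ c : ι × Fin k, c ∉ frset z → W c.1 c.2 = 0)
    (hWgrp : ∀ i, ∑ ℓ, W i ℓ = 0)
    (hWrow : ∀ r, 2*t < ∑ c ∈ frset z, A r c.1 c.2 → ∑ i, ∑ ℓ, A r i ℓ * W i ℓ = 0)
    (hWne : ∃ c : ι × Fin k, W c.1 c.2 ≠ 0) :
    ∃ lam : ℝ, 0 < lam ∧ BFok A t z (fun i ℓ => z i ℓ + lam * W i ℓ) := by
  classical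
  set Fr := frset z with hFr
  set Sup := Finset.univ.filter (fun c : ι × Fin k => W c.1 c.2 ≠ 0) with hSup
  have hSupne : Sup.Nonempty := by
    obtain ⟨c, hc⟩ := hWne
    exact ⟨c, Finset.mem_filter.2 ⟨Finset.mem_univ c, hc⟩⟩
  have hSupFr : ∀ c ∈ Sup, c ∈ Fr := by
    intro c hc
    by_contra h
    exact (Finset.mem_filter.1 hc).2 (hWout c h)
  have hfrac : ∀ c ∈ Fr, 0 < z c.1 c.2 ∧ z c.1 c.2 < 1 := by
    intro c hc
    simp only [hFr, frset, Finset.mem_filter, Finset.mem_univ, true_and] at hc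
    exact ⟨lt_of_le_of_ne (hz0 c.1 c.2) (Ne.symm hc.1), lt_of_le_of_ne (hz1 c.1 c.2) hc.2⟩
  obtain ⟨cP, hcPmem, hcPmin⟩ := Finset.exists_min_image Sup (fun c =>
    if 0 < W c.1 c.2 then (1 - z c.1 c.2) / W c.1 c.2 else z c.1 c.2 / (-(W c.1 c.2))) hSupne
  set lam := if 0 < W cP.1 cP.2 then (1 - z cP.1 cP.2) / W cP.1 cP.2
    else z cP.1 cP.2 / (-(W cP.1 cP.2)) with hlam
  have hρpos : ∀ c ∈ Sup, 0 < (if 0 < W c.1 c.2 then (1 - z c.1 c.2) / W c.1 c.2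
      else z c.1 c.2 / (-(W c.1 c.2))) := by
    intro c hc
    obtain ⟨hz0', hz1'⟩ := hfrac c (hSupFr c hc)
    have hWne' : W c.1 c.2 ≠ 0 := (Finset.mem_filter.1 hc).2
    by_cases h : 0 < W c.1 c.2
    · rw [if_pos h]; exact div_pos (by linarith) h
    · rw [if_neg h]
      have : W c.1 c.2 < 0 := lt_of_le_of_ne (not_lt.1 h) hWne'
      exact div_pos hz0' (by linarith)
  have hlampos : 0 < lam := hρpos cP hcPmem
  have hub : ∀ i ℓ, W i ℓ ≠ 0 → (0 < W i ℓ → lam * W i ℓ ≤ 1 - z i ℓ)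
      ∧ (W i ℓ < 0 → lam * (-(W i ℓ)) ≤ z i ℓ) := by
    intro i ℓ hne
    have hmem : ((i,ℓ) : ι × Fin k) ∈ Sup := Finset.mem_filter.2 ⟨Finset.mem_univ _, hne⟩
    have hle := hcPmin _ hmem
    constructor
    · intro h
      rw [if_pos h] at hle
      exact (le_div_iff₀ h).1 hle
    · intro h
      rw [if_neg (not_lt.2 h.le)] at hle
      exact (le_div_iff₀ (by linarith)).1 hle
  refine ⟨lam, hlampos, ?_, ?_, ?_, ?_, ?_, ?_⟩
  · -- 0 ≤
    intro i ℓ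
    show 0 ≤ z i ℓ + lam * W i ℓ
    by_cases hU0 : W i ℓ = 0
    · rw [hU0]; linarith [hz0 i ℓ]
    · rcases lt_or_gt_of_ne hU0 with hneg | hpos
      · have := (hub i ℓ hU0).2 hneg
        linarith
      · nlinarith [hz0 i ℓ]
  · -- ≤ 1
    intro i ℓ
    show z i ℓ + lam * W i ℓ ≤ 1
    by_cases hU0 : W i ℓ = 0
    · rw [hU0]; linarith [hz1 i ℓ]
    · rcases lt_or_gt_of_ne hU0 with hneg | hpos
      · nlinarith [hz1 i ℓ]
      · have := (hub i ℓ hU0).1 hpos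
        linarith
  · -- row sums
    intro i
    show ∑ ℓ, (z i ℓ + lam * W i ℓ) = 1
    rw [Finset.sum_add_distrib, hzs i, ← Finset.mul_sum, hWgrp i]
    ring
  · -- unchanged outside Fr
    intro c hc
    show z c.1 c.2 + lam * W c.1 c.2 = z c.1 c.2
    rw [hWout c hc]
    ring
  · -- card decreases
    have hsub : frset (fun i ℓ => z i ℓ + lam * W i ℓ) ⊆ Fr := by
      intro c hc
      by_contra h
      have hWc := hWout c h
      simp only [frset, Finset.mem_filter, Finset.mem_univ, true_and] at hc
      rw [hWc, mul_zero, add_zero] at hc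
      simp only [hFr, frset, Finset.mem_filter, Finset.mem_univ, true_and] at h
      exact h hc
    have hWneP : W cP.1 cP.2 ≠ 0 := (Finset.mem_filter.1 hcPmem).2
    have hcPnot : cP ∉ frset (fun i ℓ => z i ℓ + lam * W i ℓ) := by
      simp only [frset, Finset.mem_filter, Finset.mem_univ, true_and, not_and_or, not_not]
      by_cases h : 0 < W cP.1 cP.2
      · right
        rw [hlam]
        rw [if_pos h]
        field_simp
        ring
      · left
        have hneg : W cP.1 cP.2 < 0 := lt_of_le_of_ne (not_lt.1 h) hWneP
        rw [hlam, if_neg h, div_neg, neg_mul, div_mul_cancel₀ _ hWneP]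
        ring
    exact Finset.card_lt_card ((Finset.ssubset_iff_of_subset hsub).2
      ⟨cP, hSupFr cP hcPmem, hcPnot⟩)
  · -- active rows unchanged
    intro r hr
    show ∑ i, ∑ ℓ, A r i ℓ * (z i ℓ + lam * W i ℓ) = ∑ i, ∑ ℓ, A r i ℓ * z i ℓ
    have expand : ∀ i, ∑ ℓ, A r i ℓ * (z i ℓ + lam * W i ℓ)
        = (∑ ℓ, A r i ℓ * z i ℓ) + lam * ∑ ℓ, A r i ℓ * W i ℓ := by
      intro i
      rw [Finset.mul_sum, ← Finset.sum_add_distrib]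
      exact Finset.sum_congr rfl (fun ℓ _ => by ring)
    calc ∑ i, ∑ ℓ, A r i ℓ * (z i ℓ + lam * W i ℓ)
        = ∑ i, ((∑ ℓ, A r i ℓ * z i ℓ) + lam * ∑ ℓ, A r i ℓ * W i ℓ) :=
          Finset.sum_congr rfl (fun i _ => expand i)
      _ = (∑ i, ∑ ℓ, A r i ℓ * z i ℓ) + lam * ∑ i, ∑ ℓ, A r i ℓ * W i ℓ := by
          rw [Finset.sum_add_distrib, ← Finset.mul_sum]
      _ = ∑ i, ∑ ℓ, A r i ℓ * z i ℓ := by rw [hWrow r hr]; ring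

lemma bf_step {k : ℕ} (A : R → ι → Fin k → ℝ) (hA : ∀ r i ℓ, 0 ≤ A r i ℓ)
    (t : ℝ) (ht : 0 ≤ t) (hcol : ∀ i ℓ, ∑ r, A r i ℓ ≤ t)
    (z : ι → Fin k → ℝ) (hz0 : ∀ i ℓ, 0 ≤ z i ℓ) (hz1 : ∀ i ℓ, z i ℓ ≤ 1)
    (hzs : ∀ i, ∑ ℓ, z i ℓ = 1) (hf : 0 < (frset z).card) :
    ∃ (z₁ z₂ : ι → Fin k → ℝ) (lam : ℝ), 0 ≤ lam ∧ lam ≤ 1 ∧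
      (∀ i ℓ, z i ℓ = lam * z₁ i ℓ + (1-lam) * z₂ i ℓ) ∧ BFok A t z z₁ ∧ BFok A t z z₂ := by
  classical
  set Fr := frset z with hFr
  set Act := Finset.univ.filter (fun r : R => 2*t < ∑ c ∈ Fr, A r c.1 c.2) with hAct
  set Grp := Fr.image Prod.fst with hGrp
  have hcount : Act.card + Grp.card < Fr.card := by
    have hg := grp_count hz0 hz1 hzs
    rw [← hFr, ← hGrp] at hg
    rcases act_count A hA t ht hcol Fr with h | h
    · rw [← hAct] at h
      omega
    · rw [← hAct] at h
      rw [h]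
      simp only [Finset.card_empty, zero_add]
      omega
  obtain ⟨u, hu0, hrow, hgrp⟩ := exists_kernel_vec Fr Act Grp A hcount
  set U : ι → Fin k → ℝ := fun i ℓ => if h : (i,ℓ) ∈ Fr then u ⟨(i,ℓ), h⟩ else 0 with hU
  have hUout : ∀ c : ι × Fin k, c ∉ Fr → U c.1 c.2 = 0 := by
    intro c hc
    rw [hU]
    exact dif_neg (by rwa [Prod.mk.eta])
  have hUin : ∀ (c : ι × Fin k) (hc : c ∈ Fr), U c.1 c.2 = u ⟨c, hc⟩ := by
    intro c hc
    have h' : ((c.1, c.2) : ι × Fin k) ∈ Fr := by rwa [Prod.mk.eta]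
    have he : U c.1 c.2 = u ⟨(c.1, c.2), h'⟩ := dif_pos h'
    rw [he]
  have bridge : ∀ v : ι → Fin k → ℝ,
      ∑ i, ∑ ℓ, v i ℓ * U i ℓ = ∑ c : {c // c ∈ Fr}, v c.1.1 c.1.2 * u c := by
    intro v
    have e0 : ∑ i, ∑ ℓ, v i ℓ * U i ℓ = ∑ c : ι × Fin k, v c.1 c.2 * U c.1 c.2 :=
      (Fintype.sum_prod_type (f := fun c : ι × Fin k => v c.1 c.2 * U c.1 c.2)).symm
    have e3 : ∑ c ∈ Fr, v c.1 c.2 * U c.1 c.2 = ∑ c : ι × Fin k, v c.1 c.2 * U c.1 c.2 :=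
      Finset.sum_subset (Finset.subset_univ Fr)
        (fun c _ hc => by rw [hUout c hc, mul_zero])
    have e2 : ∑ c ∈ Fr.attach, v c.1.1 c.1.2 * U c.1.1 c.1.2
        = ∑ c ∈ Fr, v c.1 c.2 * U c.1 c.2 :=
      Finset.sum_attach Fr (fun c => v c.1 c.2 * U c.1 c.2)
    have e1 : ∑ c : {c // c ∈ Fr}, v c.1.1 c.1.2 * u c
        = ∑ c ∈ Fr.attach, v c.1.1 c.1.2 * U c.1.1 c.1.2 := by
      rw [Finset.univ_eq_attach]
      exact Finset.sum_congr rfl (fun c _ => by rw [hUin c.1 c.2])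
    rw [e0, ← e3, ← e2, e1]
  have hUgrp : ∀ i, ∑ ℓ, U i ℓ = 0 := by
    intro i
    by_cases hi : i ∈ Grp
    · have hb := bridge (fun i' _ => if i' = i then (1:ℝ) else 0)
      have hz := hgrp i hi
      have hsame : ∑ c : {c // c ∈ Fr}, (if c.1.1 = i then (1:ℝ) else 0) * u c
          = ∑ c : {c // c ∈ Fr}, (fun i' (_ : Fin k) => if i' = i then (1:ℝ) else 0) c.1.1 c.1.2 * u c := rfl
      rw [← hsame, hz] at hb
      have hl : ∑ i', ∑ ℓ, (fun i' (_ : Fin k) => if i' = i then (1:ℝ) else 0) i' ℓ * U i' ℓ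
          = ∑ ℓ, U i ℓ := by
        rw [Finset.sum_eq_single_of_mem i (Finset.mem_univ i)]
        · exact Finset.sum_congr rfl (fun ℓ _ => by simp)
        · intro i' _ hne
          exact Finset.sum_eq_zero (fun ℓ _ => by simp [hne])
      rw [hl] at hb
      exact hb
    · apply Finset.sum_eq_zero
      intro ℓ _
      exact hUout (i, ℓ) (fun hmem => hi (Finset.mem_image_of_mem Prod.fst hmem))
  have hUrow : ∀ r, 2*t < ∑ c ∈ Fr, A r c.1 c.2 → ∑ i, ∑ ℓ, A r i ℓ * U i ℓ = 0 := by
    intro r hr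
    rw [bridge (A r)]
    exact hrow r (Finset.mem_filter.2 ⟨Finset.mem_univ r, hr⟩)
  have hUne : ∃ c : ι × Fin k, U c.1 c.2 ≠ 0 := by
    obtain ⟨c, hc⟩ := Function.ne_iff.1 hu0
    refine ⟨c.1, ?_⟩
    rw [hUin c.1 c.2]
    simpa using hc
  obtain ⟨lamP, hlamP, hok1⟩ := shift_ok A t z hz0 hz1 hzs U hUout hUgrp hUrow hUne
  have hUne' : ∃ c : ι × Fin k, (-(U c.1 c.2)) ≠ 0 := by
    obtain ⟨c, hc⟩ := hUne
    exact ⟨c, by simpa using hc⟩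
  obtain ⟨lamN, hlamN, hok2⟩ := shift_ok A t z hz0 hz1 hzs (fun i ℓ => -(U i ℓ))
    (fun c hc => by show -(U c.1 c.2) = 0; rw [hUout c hc]; ring)
    (fun i => by
      show ∑ ℓ, -(U i ℓ) = 0
      rw [Finset.sum_neg_distrib, hUgrp i]
      ring)
    (fun r hr => by
      show ∑ i, ∑ ℓ, A r i ℓ * (-(U i ℓ)) = 0
      have expand : ∑ i, ∑ ℓ, A r i ℓ * (-(U i ℓ)) = -(∑ i, ∑ ℓ, A r i ℓ * U i ℓ) := by
        rw [← Finset.sum_neg_distrib]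
        exact Finset.sum_congr rfl (fun i _ => by
          rw [← Finset.sum_neg_distrib]
          exact Finset.sum_congr rfl (fun ℓ _ => by ring))
      rw [expand, hUrow r hr]; ring)
    hUne'
  refine ⟨(fun i ℓ => z i ℓ + lamP * U i ℓ), (fun i ℓ => z i ℓ + lamN * (-(U i ℓ))),
    lamN / (lamP + lamN), ?_, ?_, ?_, hok1, hok2⟩
  · positivity
  · rw [div_le_one (by linarith)]; linarith
  · intro i ℓ
    have hPN : lamP + lamN ≠ 0 := by linarith
    field_simp
    ring

lemma dev_le_mass {k : ℕ} (A : R → ι → Fin k → ℝ) (hA : ∀ r i ℓ, 0 ≤ A r i ℓ) (r : R)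
    (z χ : ι → Fin k → ℝ) (hz0 : ∀ i ℓ, 0 ≤ z i ℓ) (hz1 : ∀ i ℓ, z i ℓ ≤ 1)
    (h01 : ∀ i ℓ, χ i ℓ = 0 ∨ χ i ℓ = 1)
    (hagree : ∀ c : ι × Fin k, c ∉ frset z → χ c.1 c.2 = z c.1 c.2) :
    |∑ i, ∑ ℓ, A r i ℓ * (χ i ℓ - z i ℓ)| ≤ ∑ c ∈ frset z, A r c.1 c.2 := by
  classical
  have e0 : ∑ i, ∑ ℓ, A r i ℓ * (χ i ℓ - z i ℓ)
      = ∑ c : ι × Fin k, A r c.1 c.2 * (χ c.1 c.2 - z c.1 c.2) :=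
    (Fintype.sum_prod_type (f := fun c : ι × Fin k => A r c.1 c.2 * (χ c.1 c.2 - z c.1 c.2))).symm
  rw [e0]
  calc |∑ c : ι × Fin k, A r c.1 c.2 * (χ c.1 c.2 - z c.1 c.2)|
      ≤ ∑ c : ι × Fin k, |A r c.1 c.2 * (χ c.1 c.2 - z c.1 c.2)| :=
        Finset.abs_sum_le_sum_abs _ _
    _ ≤ ∑ c : ι × Fin k, (if c ∈ frset z then A r c.1 c.2 else 0) := by
        apply Finset.sum_le_sum
        intro c _
        by_cases hc : c ∈ frset z
        · rw [if_pos hc, abs_mul, abs_of_nonneg (hA r c.1 c.2)]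
          have h1 : |χ c.1 c.2 - z c.1 c.2| ≤ 1 := by
            rcases h01 c.1 c.2 with h | h <;>
              (rw [h, abs_le]; constructor <;> [linarith [hz1 c.1 c.2]; linarith [hz0 c.1 c.2]])
          nlinarith [hA r c.1 c.2, abs_nonneg (χ c.1 c.2 - z c.1 c.2)]
        · rw [if_neg hc, hagree c hc]
          simp
    _ = ∑ c ∈ frset z, A r c.1 c.2 := by
        rw [Finset.sum_ite_mem, Finset.univ_inter]

lemma bf_round {k : ℕ} (A : R → ι → Fin k → ℝ) (hA : ∀ r i ℓ, 0 ≤ A r i ℓ)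
    (t : ℝ) (ht : 0 ≤ t) (hcol : ∀ i ℓ, ∑ r, A r i ℓ ≤ t) :
    ∀ (f : ℕ) (z : ι → Fin k → ℝ), (frset z).card = f →
      (∀ i ℓ, 0 ≤ z i ℓ) → (∀ i ℓ, z i ℓ ≤ 1) → (∀ i, ∑ ℓ, z i ℓ = 1) →
      ∃ (N : ℕ) (w : Fin N → ℝ) (χ : Fin N → ι → Fin k → ℝ),
        (∀ s, 0 ≤ w s) ∧ (∑ s, w s = 1) ∧
        (∀ s i ℓ, χ s i ℓ = 0 ∨ χ s i ℓ = 1) ∧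
        (∀ s i ℓ, z i ℓ = 0 → χ s i ℓ = 0) ∧
        (∀ s i ℓ, z i ℓ = 1 → χ s i ℓ = 1) ∧
        (∀ s i, ∑ ℓ, χ s i ℓ = 1) ∧
        (∀ i ℓ, ∑ s, w s * χ s i ℓ = z i ℓ) ∧
        (∀ s r, |∑ i, ∑ ℓ, A r i ℓ * (χ s i ℓ - z i ℓ)| ≤ 2*t) := by
  intro f
  induction f using Nat.strong_induction_on with
  | _ f IH =>
    intro z hfz hz0 hz1 hzs
    by_cases hf0 : (frset z).card = 0
    · -- base case: z is integral
      have hint : ∀ i ℓ, z i ℓ = 0 ∨ z i ℓ = 1 := by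
        intro i ℓ
        by_contra h
        push_neg at h
        have : ((i,ℓ) : ι × Fin k) ∈ frset z :=
          Finset.mem_filter.2 ⟨Finset.mem_univ _, h⟩
        rw [Finset.card_eq_zero.1 hf0] at this
        simp at this
      refine ⟨1, (fun _ => 1), (fun _ => z), fun _ => by norm_num, by simp, ?_, ?_, ?_, ?_, ?_, ?_⟩
      · intro _ i ℓ; exact hint i ℓ
      · intro _ i ℓ h; exact h
      · intro _ i ℓ h; exact h
      · intro _ i; exact hzs i
      · intro i ℓ; simp
      · intro _ r
        have : ∑ i, ∑ ℓ, A r i ℓ * (z i ℓ - z i ℓ) = 0 := by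
          apply Finset.sum_eq_zero; intro i _
          apply Finset.sum_eq_zero; intro ℓ _
          ring
        rw [this]
        simp
        linarith
    · -- inductive step
      have hfpos : 0 < (frset z).card := Nat.pos_of_ne_zero hf0
      obtain ⟨z₁, z₂, lam, hlam0, hlam1, hconv, hok1, hok2⟩ :=
        bf_step A hA t ht hcol z hz0 hz1 hzs hfpos
      obtain ⟨h10, h11, h1s, h1out, h1card, h1act⟩ := hok1
      obtain ⟨h20, h21, h2s, h2out, h2card, h2act⟩ := hok2
      obtain ⟨N₁, w₁, χ₁, hw₁0, hw₁s, hχ₁01, hχ₁z0, hχ₁z1, hχ₁s, hχ₁E, hχ₁dev⟩ :=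
        IH (frset z₁).card (by omega) z₁ rfl h10 h11 h1s
      obtain ⟨N₂, w₂, χ₂, hw₂0, hw₂s, hχ₂01, hχ₂z0, hχ₂z1, hχ₂s, hχ₂E, hχ₂dev⟩ :=
        IH (frset z₂).card (by omega) z₂ rfl h20 h21 h2s
      -- not-fractional coords of z are 0/1 and preserved
      have hnotin : ∀ c : ι × Fin k, c ∉ frset z → z c.1 c.2 = 0 ∨ z c.1 c.2 = 1 := by
        intro c hc
        simp only [frset, Finset.mem_filter, Finset.mem_univ, true_and, not_and_or,
          not_not] at hc
        tauto
      refine ⟨N₁ + N₂, Fin.append (fun s => lam * w₁ s) (fun s => (1-lam) * w₂ s),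
        Fin.append χ₁ χ₂, ?_, ?_, ?_, ?_, ?_, ?_, ?_, ?_⟩
      · intro s
        refine Fin.addCases ?_ ?_ s <;> intro s'
        · rw [Fin.append_left]; exact mul_nonneg hlam0 (hw₁0 s')
        · rw [Fin.append_right]; exact mul_nonneg (by linarith) (hw₂0 s')
      · rw [Fin.sum_univ_add]
        simp only [Fin.append_left, Fin.append_right]
        rw [← Finset.mul_sum, ← Finset.mul_sum, hw₁s, hw₂s]
        ring
      · intro s
        refine Fin.addCases ?_ ?_ s <;> intro s' <;> intro i ℓ
        · rw [Fin.append_left]; exact hχ₁01 s' i ℓ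
        · rw [Fin.append_right]; exact hχ₂01 s' i ℓ
      · intro s
        refine Fin.addCases ?_ ?_ s <;> intro s' <;> intro i ℓ h
        · rw [Fin.append_left]
          apply hχ₁z0
          have := h1out (i,ℓ) (by
            simp only [frset, Finset.mem_filter, Finset.mem_univ, true_and, not_and_or, not_not]
            left; exact h)
          rw [this, h]
        · rw [Fin.append_right]
          apply hχ₂z0
          have := h2out (i,ℓ) (by
            simp only [frset, Finset.mem_filter, Finset.mem_univ, true_and, not_and_or, not_not]
            left; exact h)
          rw [this, h]
      · intro s
        refine Fin.addCases ?_ ?_ s <;> intro s' <;> intro i ℓ h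
        · rw [Fin.append_left]
          apply hχ₁z1
          have := h1out (i,ℓ) (by
            simp only [frset, Finset.mem_filter, Finset.mem_univ, true_and, not_and_or, not_not]
            right; exact h)
          rw [this, h]
        · rw [Fin.append_right]
          apply hχ₂z1
          have := h2out (i,ℓ) (by
            simp only [frset, Finset.mem_filter, Finset.mem_univ, true_and, not_and_or, not_not]
            right; exact h)
          rw [this, h]
      · intro s
        refine Fin.addCases ?_ ?_ s <;> intro s' <;> intro i
        · rw [Fin.append_left]  -- may not fire inside sum
          exact hχ₁s s' i
        · rw [Fin.append_right]
          exact hχ₂s s' i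
      · intro i ℓ
        rw [Fin.sum_univ_add]
        simp only [Fin.append_left, Fin.append_right]
        have e1 : ∑ s : Fin N₁, lam * w₁ s * χ₁ s i ℓ = lam * ∑ s, w₁ s * χ₁ s i ℓ := by
          rw [Finset.mul_sum]; exact Finset.sum_congr rfl (fun s _ => by ring)
        have e2 : ∑ s : Fin N₂, (1-lam) * w₂ s * χ₂ s i ℓ
            = (1-lam) * ∑ s, w₂ s * χ₂ s i ℓ := by
          rw [Finset.mul_sum]; exact Finset.sum_congr rfl (fun s _ => by ring)
        rw [e1, e2, hχ₁E i ℓ, hχ₂E i ℓ, ← hconv i ℓ]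
      · intro s r
        have split : ∀ (χz zc : ι → Fin k → ℝ),
            ∑ i, ∑ ℓ, A r i ℓ * (χz i ℓ - zc i ℓ)
              = (∑ i, ∑ ℓ, A r i ℓ * χz i ℓ) - ∑ i, ∑ ℓ, A r i ℓ * zc i ℓ := by
          intro χz zc
          rw [← Finset.sum_sub_distrib]
          refine Finset.sum_congr rfl (fun i _ => ?_)
          rw [← Finset.sum_sub_distrib]
          exact Finset.sum_congr rfl (fun ℓ _ => by ring)
        refine Fin.addCases ?_ ?_ s <;> intro s'
        · rw [Fin.append_left]
          by_cases hmass : ∑ c ∈ frset z, A r c.1 c.2 ≤ 2*t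
          · refine le_trans (dev_le_mass A hA r z (χ₁ s') hz0 hz1 (hχ₁01 s') ?_) hmass
            intro c hc
            rcases hnotin c hc with h | h
            · rw [hχ₁z0 s' c.1 c.2 (by rw [h1out c hc, h]), h]
            · rw [hχ₁z1 s' c.1 c.2 (by rw [h1out c hc, h]), h]
          · push_neg at hmass
            have heq := h1act r hmass
            rw [split (χ₁ s') z, ← heq, ← split (χ₁ s') z₁]
            exact hχ₁dev s' r
        · rw [Fin.append_right]
          by_cases hmass : ∑ c ∈ frset z, A r c.1 c.2 ≤ 2*t
          · refine le_trans (dev_le_mass A hA r z (χ₂ s') hz0 hz1 (hχ₂01 s') ?_) hmass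
            intro c hc
            rcases hnotin c hc with h | h
            · rw [hχ₂z0 s' c.1 c.2 (by rw [h2out c hc, h]), h]
            · rw [hχ₂z1 s' c.1 c.2 (by rw [h2out c hc, h]), h]
          · push_neg at hmass
            have heq := h2act r hmass
            rw [split (χ₂ s') z, ← heq, ← split (χ₂ s') z₂]
            exact hχ₂dev s' r

end BF


/-- given a fractional `k`-coloring `Y` with fractional element set `Z`
and an independent set `D ⊆ Z`, there is a finitely supported random fractional
`k`-coloring `Y'` (given by points `Y' r` with weights `w r`) which almost surely
agrees with `Y` outside `D`, integrally colors every `d ∈ D`, and changes each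
multilinear-extension value by at most `3t`; moreover `E[Y'] = Y` coordinatewise. -/
theorem rounding_independent_set_in_expectation
    (n m t k : ℕ) (hk : 2 ≤ k)
    (S : Fin m → Multiset (Finset (Fin n)))
    (hsparse : ∀ j : Fin n, (∑ i, ((S i).filter (fun s' => j ∈ s')).card) ≤ t)
    (Y : Fin n → Fin k → ℝ) (hY : IsFracColoring Y)
    (Z : Finset (Fin n)) (hZ : ∀ j : Fin n, j ∈ Z ↔ ¬ (∀ ℓ, Y j ℓ = 0 ∨ Y j ℓ = 1))
    (D : Finset (Fin n)) (hDZ : D ⊆ Z)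
    (hDind : ∀ i : Fin m, ∀ s' ∈ S i, (s' ∩ D).card ≤ 1) :
    ∃ (N : ℕ) (w : Fin N → ℝ) (Y' : Fin N → Fin n → Fin k → ℝ),
      (∀ r, 0 ≤ w r) ∧ (∑ r, w r = 1) ∧
      (∀ r, IsFracColoring (Y' r)) ∧
      (∀ r, ∀ j ∉ D, Y' r j = Y j) ∧
      (∀ r, ∀ d ∈ D, ∀ ℓ : Fin k, Y' r d ℓ = 0 ∨ Y' r d ℓ = 1) ∧
      (∀ r, ∀ (i : Fin m) (ℓ : Fin k),
        |mlext (cov (S i)) (fun j => Y' r j ℓ) - mlext (cov (S i)) (fun j => Y j ℓ)| ≤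
          3 * (t : ℝ)) ∧
      (∀ (j : Fin n) (ℓ : Fin k), ∑ r, w r * Y' r j ℓ = Y j ℓ) := by
  classical
  have hY0 : ∀ j ℓ, 0 ≤ Y j ℓ := fun j ℓ => ((hY j).1 ℓ).1
  have hY1 : ∀ j ℓ, Y j ℓ ≤ 1 := fun j ℓ => ((hY j).1 ℓ).2
  -- the coefficient matrix
  set Q : Fin m → Fin n → Fin k → ℝ := fun i d ℓ =>
    (((S i).filter (fun s => d ∈ s)).map (fun s => ∏ j ∈ s.erase d, (1 - Y j ℓ))).sum with hQ
  set A : (Fin m × Fin k) → {d // d ∈ D} → Fin k → ℝ := fun r d ℓ =>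
    if ℓ = r.2 then Q r.1 ↑d ℓ else 0 with hA
  have hQ0 : ∀ i d ℓ, 0 ≤ Q i d ℓ := by
    intro i d ℓ
    rw [hQ]
    apply multiset_map_sum_nonneg
    intro s hs
    apply Finset.prod_nonneg
    intro j hj
    linarith [hY1 j ℓ]
  have hQle : ∀ i d ℓ, Q i d ℓ ≤ (((S i).filter (fun s => d ∈ s)).card : ℝ) := by
    intro i d ℓ
    rw [hQ]
    apply multiset_map_sum_le
    intro s hs
    apply Finset.prod_le_one
    · intro j hj; linarith [hY1 j ℓ]
    · intro j hj; linarith [hY0 j ℓ]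
  have hAnn : ∀ r d ℓ, 0 ≤ A r d ℓ := by
    intro r d ℓ
    rw [hA]
    by_cases h : ℓ = r.2
    · simp only [if_pos h]; exact hQ0 r.1 ↑d ℓ
    · simp only [if_neg h]; exact le_refl 0
  have hcol : ∀ (d : {d // d ∈ D}) (ℓ : Fin k), ∑ r : Fin m × Fin k, A r d ℓ ≤ (t:ℝ) := by
    intro d ℓ
    rw [Fintype.sum_prod_type]
    have e : ∀ i : Fin m, ∑ ℓ₀ : Fin k, A (i, ℓ₀) d ℓ = Q i ↑d ℓ := by
      intro i
      have : ∀ ℓ₀ : Fin k, A (i, ℓ₀) d ℓ = if ℓ = ℓ₀ then Q i ↑d ℓ else 0 := fun ℓ₀ => by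
        rw [hA]
      rw [Finset.sum_congr rfl (fun ℓ₀ _ => this ℓ₀), Finset.sum_ite_eq]
      simp
    rw [Finset.sum_congr rfl (fun i _ => e i)]
    calc ∑ i, Q i ↑d ℓ
        ≤ ∑ i, (((S i).filter (fun s => (↑d : Fin n) ∈ s)).card : ℝ) :=
          Finset.sum_le_sum (fun i _ => hQle i ↑d ℓ)
      _ = ((∑ i, ((S i).filter (fun s => (↑d : Fin n) ∈ s)).card : ℕ) : ℝ) := by
          push_cast; ring
      _ ≤ (t : ℝ) := by exact_mod_cast hsparse ↑d
  have ht0 : (0:ℝ) ≤ (t:ℝ) := Nat.cast_nonneg t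
  obtain ⟨N, w, χ, hw0, hws, hχ01, hχz0, hχz1, hχs, hχE, hχdev⟩ :=
    bf_round A hAnn (t:ℝ) ht0 hcol
      ((frset (fun (d : {d // d ∈ D}) ℓ => Y ↑d ℓ)).card)
      (fun (d : {d // d ∈ D}) ℓ => Y ↑d ℓ) rfl
      (fun d ℓ => hY0 ↑d ℓ) (fun d ℓ => hY1 ↑d ℓ) (fun d => (hY ↑d).2)
  set Y' : Fin N → Fin n → Fin k → ℝ :=
    fun s j ℓ => if h : j ∈ D then χ s ⟨j, h⟩ ℓ else Y j ℓ with hY'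
  refine ⟨N, w, Y', hw0, hws, ?_, ?_, ?_, ?_, ?_⟩
  · -- fractional coloring
    intro s j
    by_cases h : j ∈ D
    · constructor
      · intro ℓ
        have hy : Y' s j ℓ = χ s ⟨j, h⟩ ℓ := by rw [hY']; exact dif_pos h
        rw [hy]
        rcases hχ01 s ⟨j, h⟩ ℓ with h' | h' <;> rw [h'] <;> norm_num
      · have hy : ∀ ℓ, Y' s j ℓ = χ s ⟨j, h⟩ ℓ := fun ℓ => by rw [hY']; exact dif_pos h
        rw [Finset.sum_congr rfl (fun ℓ _ => hy ℓ)]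
        exact hχs s ⟨j, h⟩
    · constructor
      · intro ℓ
        have hy : Y' s j ℓ = Y j ℓ := by rw [hY']; exact dif_neg h
        rw [hy]; exact (hY j).1 ℓ
      · have hy : ∀ ℓ, Y' s j ℓ = Y j ℓ := fun ℓ => by rw [hY']; exact dif_neg h
        rw [Finset.sum_congr rfl (fun ℓ _ => hy ℓ)]
        exact (hY j).2
  · -- agrees outside D
    intro s j hj
    funext ℓ
    rw [hY']
    exact dif_neg hj
  · -- integral on D
    intro s d hd ℓ
    have hy : Y' s d ℓ = χ s ⟨d, hd⟩ ℓ := by rw [hY']; exact dif_pos hd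
    rw [hy]
    exact hχ01 s ⟨d, hd⟩ ℓ
  · -- the discrepancy bound
    intro s i ℓ
    have hxy : ∀ j ∉ D, Y' s j ℓ = Y j ℓ := by
      intro j hj
      rw [hY']
      exact dif_neg hj
    have hdiff := cov_diff (S i) D (hDind i) (fun j => Y' s j ℓ) (fun j => Y j ℓ) hxy
    have ebridge : ∑ d ∈ D, (Y' s d ℓ - Y d ℓ) *
          (((S i).filter (fun s' => d ∈ s')).map
            (fun s' => ∏ j ∈ s'.erase d, (1 - Y j ℓ))).sum
        = ∑ d : {d // d ∈ D}, ∑ ℓ',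
            A (i, ℓ) d ℓ' * (χ s d ℓ' - Y (↑d) ℓ') := by
      rw [← Finset.sum_coe_sort D (fun d => (Y' s d ℓ - Y d ℓ) *
        (((S i).filter (fun s' => d ∈ s')).map
          (fun s' => ∏ j ∈ s'.erase d, (1 - Y j ℓ))).sum)]
      apply Finset.sum_congr rfl
      intro d _
      have einner : ∑ ℓ', A (i, ℓ) d ℓ' * (χ s d ℓ' - Y (↑d) ℓ')
          = Q i ↑d ℓ * (χ s d ℓ - Y (↑d) ℓ) := by
        rw [Finset.sum_eq_single_of_mem ℓ (Finset.mem_univ ℓ)]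
        · have : A (i, ℓ) d ℓ = Q i ↑d ℓ := by rw [hA]; simp
          rw [this]
        · intro ℓ' _ hne
          have : A (i, ℓ) d ℓ' = 0 := by rw [hA]; simp [hne]
          rw [this, zero_mul]
      rw [einner]
      have hxd : Y' s ↑d ℓ = χ s d ℓ := by rw [hY']; exact dif_pos d.2
      have hqe : (((S i).filter (fun s' => (↑d : Fin n) ∈ s')).map
          (fun s' => ∏ j ∈ s'.erase ↑d, (1 - Y j ℓ))).sum = Q i ↑d ℓ := by rw [hQ]
      rw [hxd, hqe]
      ring
    rw [hdiff, ebridge]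
    calc |∑ d : {d // d ∈ D}, ∑ ℓ', A (i, ℓ) d ℓ' * (χ s d ℓ' - Y (↑d) ℓ')|
        ≤ 2 * (t:ℝ) := hχdev s (i, ℓ)
      _ ≤ 3 * (t:ℝ) := by linarith
  · -- expectation
    intro j ℓ
    by_cases h : j ∈ D
    · have hy : ∀ s, Y' s j ℓ = χ s ⟨j, h⟩ ℓ := fun s => by rw [hY']; exact dif_pos h
      rw [Finset.sum_congr rfl (fun s _ => by rw [hy s])]
      exact hχE ⟨j, h⟩ ℓ
    · have hy : ∀ s, Y' s j ℓ = Y j ℓ := fun s => by rw [hY']; exact dif_neg h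
      rw [Finset.sum_congr rfl (fun s _ => by rw [hy s])]
      rw [← Finset.sum_mul, hws, one_mul]
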